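/- For smooth vector fields u, ū : ℝ^d → ℝ^d, the pointwise identity −[(u·∇)u − (ū·∇)ū]·(u − ū) − (1/2)[(∇·u)u − (∇·ū)ū]·(u − ū) = −∇·[ (|u − ū|^2/2) u ] − ((u − ū)·∇)ū·(u − ū) − (1/2)(∇·(u − ū)) ū·(u − ū) holds. -/

import Mathlib

open scoped BigOperators

/-- Partial derivative of a scalar field on `ℝ^d` in the `j`-th coordinate direction. -/
noncomputable def pd {d : ℕ} (f : (Fin d → ℝ) → ℝ) (j : Fin d) (x : Fin d → ℝ) : ℝ :=
  fderiv ℝ f x (Pi.single j 1)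

/-- Divergence of a vector field on `ℝ^d`. -/
noncomputable def dvg {d : ℕ} (v : (Fin d → ℝ) → (Fin d → ℝ)) (x : Fin d → ℝ) : ℝ :=
  ∑ i, pd (fun y => v y i) i x

lemma pd_sub {d : ℕ} (f g : (Fin d → ℝ) → ℝ) (j : Fin d) (x : Fin d → ℝ)
    (hf : DifferentiableAt ℝ f x) (hg : DifferentiableAt ℝ g x) :
    pd (fun y => f y - g y) j x = pd f j x - pd g j x := by
  unfold pd
  rw [fderiv_fun_sub hf hg]
  simp

lemma pd_half_sq_sum {d : ℕ} (u ub : (Fin d → ℝ) → (Fin d → ℝ))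
    (hu : Differentiable ℝ u) (hub : Differentiable ℝ ub) (x : Fin d → ℝ) (j : Fin d) :
    pd (fun y => (∑ k, (u y k - ub y k)^2) / 2) j x
      = ∑ k, (u x k - ub x k) *
          (pd (fun y => u y k) j x - pd (fun y => ub y k) j x) := by
  have hk : ∀ k, DifferentiableAt ℝ (fun y => u y k) x :=
    fun k => (differentiable_pi.mp hu k) x
  have hk' : ∀ k, DifferentiableAt ℝ (fun y => ub y k) x :=
    fun k => (differentiable_pi.mp hub k) x
  have hw : ∀ k, DifferentiableAt ℝ (fun y => u y k - ub y k) x :=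
    fun k => (hk k).sub (hk' k)
  have hsq : ∀ k, DifferentiableAt ℝ (fun y => (u y k - ub y k)^2) x :=
    fun k => (hw k).pow 2
  unfold pd
  have h1 : (fun y => (∑ k, (u y k - ub y k)^2) / 2)
      = fun y => (2:ℝ)⁻¹ * ∑ k, (u y k - ub y k)^2 := by
    funext y; rw [div_eq_inv_mul]
  rw [h1, fderiv_const_mul (DifferentiableAt.fun_sum fun k _ => hsq k),
    fderiv_fun_sum fun k _ => hsq k]
  simp only [ContinuousLinearMap.smul_apply, ContinuousLinearMap.sum_apply, smul_eq_mul]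
  have h2 : ∀ k : Fin d, fderiv ℝ (fun y => (u y k - ub y k)^2) x (Pi.single j 1)
      = 2 * (u x k - ub x k) *
        (fderiv ℝ (fun y => u y k) x (Pi.single j 1)
          - fderiv ℝ (fun y => ub y k) x (Pi.single j 1)) := by
    intro k
    have : (fun y => (u y k - ub y k)^2)
        = fun y => (u y k - ub y k) * (u y k - ub y k) := by funext y; ring
    rw [this, fderiv_fun_mul (hw k) (hw k), fderiv_fun_sub (hk k) (hk' k)]
    simp only [ContinuousLinearMap.add_apply, ContinuousLinearMap.smul_apply,
      ContinuousLinearMap.sub_apply, smul_eq_mul]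
    ring
  rw [Finset.mul_sum]
  refine Finset.sum_congr rfl fun k _ => ?_
  rw [h2 k]; ring

lemma pd_prod {d : ℕ} (u ub : (Fin d → ℝ) → (Fin d → ℝ))
    (hu : Differentiable ℝ u) (hub : Differentiable ℝ ub) (x : Fin d → ℝ) (i j : Fin d) :
    pd (fun y => ((∑ k, (u y k - ub y k)^2) / 2) * u y i) j x
      = (∑ k, (u x k - ub x k) *
            (pd (fun y => u y k) j x - pd (fun y => ub y k) j x)) * u x i
        + ((∑ k, (u x k - ub x k)^2) / 2) * pd (fun y => u y i) j x := by
  have hk : ∀ k, DifferentiableAt ℝ (fun y => u y k) x :=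
    fun k => (differentiable_pi.mp hu k) x
  have hk' : ∀ k, DifferentiableAt ℝ (fun y => ub y k) x :=
    fun k => (differentiable_pi.mp hub k) x
  have hs : DifferentiableAt ℝ (fun y => ∑ k, (u y k - ub y k)^2) x :=
    DifferentiableAt.fun_sum fun k _ => ((hk k).sub (hk' k)).pow 2
  have hf : DifferentiableAt ℝ (fun y => (∑ k, (u y k - ub y k)^2) / 2) x :=
    by simp only [div_eq_inv_mul]; exact hs.const_mul _
  have key := pd_half_sq_sum u ub hu hub x j
  unfold pd at key ⊢
  rw [fderiv_fun_mul hf (hk i)]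
  simp only [ContinuousLinearMap.add_apply, ContinuousLinearMap.smul_apply, smul_eq_mul]
  rw [key]; ring

lemma alg (d : ℕ) (A B : Fin d → ℝ) (P Q : Fin d → Fin d → ℝ) :
    -(∑ i, (∑ j, (A j * P i j - B j * Q i j)) * (A i - B i))
      - (1/2) * ∑ i, ((∑ j, P j j) * A i - (∑ j, Q j j) * B i) * (A i - B i)
    = -(∑ i, ((∑ k, (A k - B k) * (P k i - Q k i)) * A i
          + ((∑ k, (A k - B k)^2) / 2) * P i i))
      - (∑ i, (∑ j, (A j - B j) * Q i j) * (A i - B i))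
      - (1/2) * (∑ i, (P i i - Q i i)) * (∑ i, B i * (A i - B i)) := by
  have h1 : ∑ i, (∑ j, (A j * P i j - B j * Q i j)) * (A i - B i)
      = (∑ i, (∑ j, (A j - B j) * Q i j) * (A i - B i))
        + ∑ i, (∑ k, (A k - B k) * (P k i - Q k i)) * A i := by
    have hswap : (∑ i, (∑ k, (A k - B k) * (P k i - Q k i)) * A i)
        = ∑ i, ∑ j, (A i - B i) * (P i j - Q i j) * A j := by
      simp only [Finset.sum_mul]
      rw [Finset.sum_comm]
    rw [hswap]
    simp only [Finset.sum_mul, ← Finset.sum_add_distrib]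
    refine Finset.sum_congr rfl fun i _ => Finset.sum_congr rfl fun j _ => ?_
    ring
  have hSW : ∑ i, (A i - B i)^2
      = (∑ i, A i * (A i - B i)) - ∑ i, B i * (A i - B i) := by
    rw [← Finset.sum_sub_distrib]
    exact Finset.sum_congr rfl fun i _ => by ring
  have h2 : ∑ i, ((∑ j, P j j) * A i - (∑ j, Q j j) * B i) * (A i - B i)
      = (∑ j, P j j) * (∑ i, A i * (A i - B i))
        - (∑ j, Q j j) * (∑ i, B i * (A i - B i)) := by
    rw [Finset.mul_sum, Finset.mul_sum, ← Finset.sum_sub_distrib]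
    exact Finset.sum_congr rfl fun i _ => by ring
  have h3 : ∑ i, ((∑ k, (A k - B k) * (P k i - Q k i)) * A i
        + ((∑ k, (A k - B k)^2) / 2) * P i i)
      = (∑ i, (∑ k, (A k - B k) * (P k i - Q k i)) * A i)
        + ((∑ k, (A k - B k)^2) / 2) * ∑ i, P i i := by
    rw [Finset.sum_add_distrib, ← Finset.mul_sum]
  have h4 : ∑ i, (P i i - Q i i) = (∑ i, P i i) - ∑ i, Q i i :=
    Finset.sum_sub_distrib _ _
  rw [h1, h2, h3, h4, hSW]
  ring

theorem stmt_14 (d : ℕ) (u ub : (Fin d → ℝ) → (Fin d → ℝ))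
    (hu : Differentiable ℝ u) (hub : Differentiable ℝ ub) (x : Fin d → ℝ) :
    -(∑ i, (∑ j, (u x j * pd (fun y => u y i) j x
                  - ub x j * pd (fun y => ub y i) j x)) * (u x i - ub x i))
      - (1/2) * ∑ i, (dvg u x * u x i - dvg ub x * ub x i) * (u x i - ub x i)
    = -(∑ i, pd (fun y => ((∑ k, (u y k - ub y k)^2) / 2) * u y i) i x)
      - (∑ i, (∑ j, (u x j - ub x j) * pd (fun y => ub y i) j x) * (u x i - ub x i))
      - (1/2) * dvg (fun y => fun k => u y k - ub y k) x
          * ∑ i, ub x i * (u x i - ub x i) := by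
  have hk : ∀ k, DifferentiableAt ℝ (fun y => u y k) x :=
    fun k => (differentiable_pi.mp hu k) x
  have hk' : ∀ k, DifferentiableAt ℝ (fun y => ub y k) x :=
    fun k => (differentiable_pi.mp hub k) x
  have hdvg : dvg (fun y => fun k => u y k - ub y k) x
      = ∑ i, (pd (fun y => u y i) i x - pd (fun y => ub y i) i x) := by
    unfold dvg
    exact Finset.sum_congr rfl fun i _ => pd_sub _ _ i x (hk i) (hk' i)
  have hprod : (∑ i, pd (fun y => ((∑ k, (u y k - ub y k)^2) / 2) * u y i) i x)
      = ∑ i, ((∑ k, (u x k - ub x k) *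
            (pd (fun y => u y k) i x - pd (fun y => ub y k) i x)) * u x i
          + ((∑ k, (u x k - ub x k)^2) / 2) * pd (fun y => u y i) i x) :=
    Finset.sum_congr rfl fun i _ => pd_prod u ub hu hub x i i
  rw [hdvg, hprod]
  unfold dvg
  exact alg d (fun i => u x i) (fun i => ub x i)
    (fun i j => pd (fun y => u y i) j x) (fun i j => pd (fun y => ub y i) j x)
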